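/- Left commutative cut (leftist substitution): if Γ and U are suspension-normal, U is stable, Γ ; L ⊢ A⁺ is derivable, and Γ ; A⁺ ⊢ U is derivable, then Γ ; L ⊢ U is derivable in the focused sequent calculus for polarized intuitionistic logic. -/

import Mathlib

namespace StructuralFocalization

/- Polarized propositional intuitionistic logic -/
mutual
inductive PProp : Type
  | atom : Nat → PProp
  | down : NProp → PProp
  | bot  : PProp
  | or   : PProp → PProp → PProp
  | top  : PProp
  | and  : PProp → PProp → PProp
inductive NProp : Type
  | atom : Nat → NProp
  | up   : PProp → NProp
  | imp  : PProp → NProp → NProp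
  | top  : NProp
  | and  : NProp → NProp → NProp
end

/- Hypotheses: negative propositions or suspended positives ⟨A⁺⟩ -/
inductive Hyp : Type
  | neg  : NProp → Hyp
  | susp : PProp → Hyp

/- Succedents: A⁺, A⁻, or suspended ⟨A⁻⟩ -/
inductive Succ : Type
  | pos  : PProp → Succ
  | neg  : NProp → Succ
  | susp : NProp → Succ

abbrev Ctx := List Hyp

def Succ.stable : Succ → Prop
  | .pos _ => True
  | .susp _ => True
  | .neg _ => False

def Hyp.suspNormal : Hyp → Prop
  | .susp (PProp.atom _) => True
  | .susp _ => False
  | .neg _ => True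

def Ctx.suspNormal (Γ : Ctx) : Prop := ∀ h ∈ Γ, h.suspNormal

def Succ.suspNormal : Succ → Prop
  | .susp (NProp.atom _) => True
  | .susp _ => False
  | _ => True

/- The focused sequent calculus (Figures 3 and 4 of "Structural focalization",
   with the generalized id⁺/id⁻ rules for arbitrary suspended propositions). -/
mutual
/-- Right focus: Γ ⊢ [A⁺] -/
inductive RFoc : Ctx → PProp → Prop
  | idP {Γ A} : Hyp.susp A ∈ Γ → RFoc Γ A
  | downR {Γ A} : Inv Γ [] (Succ.neg A) → RFoc Γ (PProp.down A)
  | orR1 {Γ A B} : RFoc Γ A → RFoc Γ (PProp.or A B)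
  | orR2 {Γ A B} : RFoc Γ B → RFoc Γ (PProp.or A B)
  | topR {Γ} : RFoc Γ PProp.top
  | andR {Γ A B} : RFoc Γ A → RFoc Γ B → RFoc Γ (PProp.and A B)
/-- Inversion: Γ ; Ω ⊢ U -/
inductive Inv : Ctx → List PProp → Succ → Prop
  | focR {Γ A} : RFoc Γ A → Inv Γ [] (Succ.pos A)
  | focL {Γ A U} : Hyp.neg A ∈ Γ → Succ.stable U → LFoc Γ A U → Inv Γ [] U
  | etaP {Γ p Ω U} : Inv (Hyp.susp (PProp.atom p) :: Γ) Ω U → Inv Γ (PProp.atom p :: Ω) U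
  | downL {Γ A Ω U} : Inv (Hyp.neg A :: Γ) Ω U → Inv Γ (PProp.down A :: Ω) U
  | botL {Γ Ω U} : Inv Γ (PProp.bot :: Ω) U
  | orL {Γ A B Ω U} : Inv Γ (A :: Ω) U → Inv Γ (B :: Ω) U → Inv Γ (PProp.or A B :: Ω) U
  | topPL {Γ Ω U} : Inv Γ Ω U → Inv Γ (PProp.top :: Ω) U
  | andPL {Γ A B Ω U} : Inv Γ (A :: B :: Ω) U → Inv Γ (PProp.and A B :: Ω) U
  | etaN {Γ p} : Inv Γ [] (Succ.susp (NProp.atom p)) → Inv Γ [] (Succ.neg (NProp.atom p))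
  | upR {Γ A} : Inv Γ [] (Succ.pos A) → Inv Γ [] (Succ.neg (NProp.up A))
  | impR {Γ A B} : Inv Γ [A] (Succ.neg B) → Inv Γ [] (Succ.neg (NProp.imp A B))
  | topNR {Γ} : Inv Γ [] (Succ.neg NProp.top)
  | andNR {Γ A B} : Inv Γ [] (Succ.neg A) → Inv Γ [] (Succ.neg B) →
      Inv Γ [] (Succ.neg (NProp.and A B))
/-- Left focus: Γ ; [A⁻] ⊢ U -/
inductive LFoc : Ctx → NProp → Succ → Prop
  | idN {Γ A} : LFoc Γ A (Succ.susp A)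
  | upL {Γ A U} : Inv Γ [A] U → LFoc Γ (NProp.up A) U
  | impL {Γ A B U} : RFoc Γ A → LFoc Γ B U → LFoc Γ (NProp.imp A B) U
  | andL1 {Γ A B U} : LFoc Γ A U → LFoc Γ (NProp.and A B) U
  | andL2 {Γ A B U} : LFoc Γ B U → LFoc Γ (NProp.and A B) U
end

/- Unpolarized propositions and Kleene's G3 -/
inductive UProp : Type
  | atom : Nat → UProp
  | bot  : UProp
  | or   : UProp → UProp → UProp
  | top  : UProp
  | and  : UProp → UProp → UProp
  | imp  : UProp → UProp → UProp

inductive G3 : List UProp → UProp → Prop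
  | init {Γ p} : UProp.atom p ∈ Γ → G3 Γ (UProp.atom p)
  | botL {Γ Q} : UProp.bot ∈ Γ → G3 Γ Q
  | orR1 {Γ A B} : G3 Γ A → G3 Γ (UProp.or A B)
  | orR2 {Γ A B} : G3 Γ B → G3 Γ (UProp.or A B)
  | orL {Γ A B Q} : UProp.or A B ∈ Γ → G3 (A :: Γ) Q → G3 (B :: Γ) Q → G3 Γ Q
  | topR {Γ} : G3 Γ UProp.top
  | andR {Γ A B} : G3 Γ A → G3 Γ B → G3 Γ (UProp.and A B)
  | andL1 {Γ A B Q} : UProp.and A B ∈ Γ → G3 (A :: Γ) Q → G3 Γ Q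
  | andL2 {Γ A B Q} : UProp.and A B ∈ Γ → G3 (B :: Γ) Q → G3 Γ Q
  | impR {Γ A B} : G3 (A :: Γ) B → G3 Γ (UProp.imp A B)
  | impL {Γ A B Q} : UProp.imp A B ∈ Γ → G3 Γ A → G3 (B :: Γ) Q → G3 Γ Q

/-- G3 with an ordered auxiliary context Ψ: Γ; Ψ ⊢ Q -/
inductive G3Psi : List UProp → List UProp → UProp → Prop
  | cons {Γ P Ψ Q} : G3Psi (P :: Γ) Ψ Q → G3Psi Γ (P :: Ψ) Q
  | nil {Γ Q} : G3 Γ Q → G3Psi Γ [] Q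

/- Erasure -/
mutual
def eraseP : PProp → UProp
  | .atom p => .atom p
  | .down A => eraseN A
  | .bot => .bot
  | .or A B => .or (eraseP A) (eraseP B)
  | .top => .top
  | .and A B => .and (eraseP A) (eraseP B)
def eraseN : NProp → UProp
  | .atom p => .atom p
  | .up A => eraseP A
  | .imp A B => .imp (eraseP A) (eraseN B)
  | .top => .top
  | .and A B => .and (eraseN A) (eraseN B)
end

def eraseHyp : Hyp → UProp
  | .neg A => eraseN A
  | .susp A => eraseP A

def eraseCtx (Γ : Ctx) : List UProp := Γ.map eraseHyp

def eraseSucc : Succ → UProp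
  | .pos A => eraseP A
  | .neg A => eraseN A
  | .susp A => eraseN A


/-- Sequent forms -/
inductive Seq : Type
  | rfoc : Ctx → PProp → Seq
  | inv  : Ctx → List PProp → Succ → Seq
  | lfoc : Ctx → NProp → Succ → Seq

/-- Single-inductive mirror of the three mutual judgments. -/
inductive D : Seq → Prop
  | idP {Γ A} : Hyp.susp A ∈ Γ → D (.rfoc Γ A)
  | downR {Γ A} : D (.inv Γ [] (Succ.neg A)) → D (.rfoc Γ (PProp.down A))
  | orR1 {Γ A B} : D (.rfoc Γ A) → D (.rfoc Γ (PProp.or A B))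
  | orR2 {Γ A B} : D (.rfoc Γ B) → D (.rfoc Γ (PProp.or A B))
  | topR {Γ} : D (.rfoc Γ PProp.top)
  | andR {Γ A B} : D (.rfoc Γ A) → D (.rfoc Γ B) → D (.rfoc Γ (PProp.and A B))
  | focR {Γ A} : D (.rfoc Γ A) → D (.inv Γ [] (Succ.pos A))
  | focL {Γ A U} : Hyp.neg A ∈ Γ → Succ.stable U → D (.lfoc Γ A U) → D (.inv Γ [] U)
  | etaP {Γ p Ω U} : D (.inv (Hyp.susp (PProp.atom p) :: Γ) Ω U) →
      D (.inv Γ (PProp.atom p :: Ω) U)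
  | downL {Γ A Ω U} : D (.inv (Hyp.neg A :: Γ) Ω U) → D (.inv Γ (PProp.down A :: Ω) U)
  | botL {Γ Ω U} : D (.inv Γ (PProp.bot :: Ω) U)
  | orL {Γ A B Ω U} : D (.inv Γ (A :: Ω) U) → D (.inv Γ (B :: Ω) U) →
      D (.inv Γ (PProp.or A B :: Ω) U)
  | topPL {Γ Ω U} : D (.inv Γ Ω U) → D (.inv Γ (PProp.top :: Ω) U)
  | andPL {Γ A B Ω U} : D (.inv Γ (A :: B :: Ω) U) → D (.inv Γ (PProp.and A B :: Ω) U)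
  | etaN {Γ p} : D (.inv Γ [] (Succ.susp (NProp.atom p))) →
      D (.inv Γ [] (Succ.neg (NProp.atom p)))
  | upR {Γ A} : D (.inv Γ [] (Succ.pos A)) → D (.inv Γ [] (Succ.neg (NProp.up A)))
  | impR {Γ A B} : D (.inv Γ [A] (Succ.neg B)) → D (.inv Γ [] (Succ.neg (NProp.imp A B)))
  | topNR {Γ} : D (.inv Γ [] (Succ.neg NProp.top))
  | andNR {Γ A B} : D (.inv Γ [] (Succ.neg A)) → D (.inv Γ [] (Succ.neg B)) →
      D (.inv Γ [] (Succ.neg (NProp.and A B)))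
  | idN {Γ A} : D (.lfoc Γ A (Succ.susp A))
  | upL {Γ A U} : D (.inv Γ [A] U) → D (.lfoc Γ (NProp.up A) U)
  | impL {Γ A B U} : D (.rfoc Γ A) → D (.lfoc Γ B U) → D (.lfoc Γ (NProp.imp A B) U)
  | andL1 {Γ A B U} : D (.lfoc Γ A U) → D (.lfoc Γ (NProp.and A B) U)
  | andL2 {Γ A B U} : D (.lfoc Γ B U) → D (.lfoc Γ (NProp.and A B) U)

def Seq.sem : Seq → Prop
  | .rfoc Γ A => RFoc Γ A
  | .inv Γ Ω U => Inv Γ Ω U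
  | .lfoc Γ B U => LFoc Γ B U

theorem ofD : ∀ {s}, D s → s.sem := by
  intro s d
  induction d with
  | idP h => exact RFoc.idP h
  | downR _ ih => exact RFoc.downR ih
  | orR1 _ ih => exact RFoc.orR1 ih
  | orR2 _ ih => exact RFoc.orR2 ih
  | topR => exact RFoc.topR
  | andR _ _ ih1 ih2 => exact RFoc.andR ih1 ih2
  | focR _ ih => exact Inv.focR ih
  | focL h st _ ih => exact Inv.focL h st ih
  | etaP _ ih => exact Inv.etaP ih
  | downL _ ih => exact Inv.downL ih
  | botL => exact Inv.botL
  | orL _ _ ih1 ih2 => exact Inv.orL ih1 ih2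
  | topPL _ ih => exact Inv.topPL ih
  | andPL _ ih => exact Inv.andPL ih
  | etaN _ ih => exact Inv.etaN ih
  | upR _ ih => exact Inv.upR ih
  | impR _ ih => exact Inv.impR ih
  | topNR => exact Inv.topNR
  | andNR _ _ ih1 ih2 => exact Inv.andNR ih1 ih2
  | idN => exact LFoc.idN
  | upL _ ih => exact LFoc.upL ih
  | impL _ _ ih1 ih2 => exact LFoc.impL ih1 ih2
  | andL1 _ ih => exact LFoc.andL1 ih
  | andL2 _ ih => exact LFoc.andL2 ih

theorem toD_inv {Γ Ω U} (h : Inv Γ Ω U) : D (.inv Γ Ω U) :=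
  Inv.rec (motive_1 := fun Γ A _ => D (.rfoc Γ A))
    (motive_2 := fun Γ Ω U _ => D (.inv Γ Ω U))
    (motive_3 := fun Γ B U _ => D (.lfoc Γ B U))
    (fun h => D.idP h) (fun _ ih => D.downR ih) (fun _ ih => D.orR1 ih)
    (fun _ ih => D.orR2 ih) D.topR (fun _ _ ih1 ih2 => D.andR ih1 ih2)
    (fun _ ih => D.focR ih) (fun h st _ ih => D.focL h st ih) (fun _ ih => D.etaP ih)
    (fun _ ih => D.downL ih) D.botL (fun _ _ ih1 ih2 => D.orL ih1 ih2)
    (fun _ ih => D.topPL ih) (fun _ ih => D.andPL ih) (fun _ ih => D.etaN ih)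
    (fun _ ih => D.upR ih) (fun _ ih => D.impR ih) D.topNR
    (fun _ _ ih1 ih2 => D.andNR ih1 ih2)
    D.idN (fun _ ih => D.upL ih) (fun _ _ ih1 ih2 => D.impL ih1 ih2)
    (fun _ ih => D.andL1 ih) (fun _ ih => D.andL2 ih) h

theorem toD_lfoc {Γ B U} (h : LFoc Γ B U) : D (.lfoc Γ B U) :=
  LFoc.rec (motive_1 := fun Γ A _ => D (.rfoc Γ A))
    (motive_2 := fun Γ Ω U _ => D (.inv Γ Ω U))
    (motive_3 := fun Γ B U _ => D (.lfoc Γ B U))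
    (fun h => D.idP h) (fun _ ih => D.downR ih) (fun _ ih => D.orR1 ih)
    (fun _ ih => D.orR2 ih) D.topR (fun _ _ ih1 ih2 => D.andR ih1 ih2)
    (fun _ ih => D.focR ih) (fun h st _ ih => D.focL h st ih) (fun _ ih => D.etaP ih)
    (fun _ ih => D.downL ih) D.botL (fun _ _ ih1 ih2 => D.orL ih1 ih2)
    (fun _ ih => D.topPL ih) (fun _ ih => D.andPL ih) (fun _ ih => D.etaN ih)
    (fun _ ih => D.upR ih) (fun _ ih => D.impR ih) D.topNR
    (fun _ _ ih1 ih2 => D.andNR ih1 ih2)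
    D.idN (fun _ ih => D.upL ih) (fun _ _ ih1 ih2 => D.impL ih1 ih2)
    (fun _ ih => D.andL1 ih) (fun _ ih => D.andL2 ih) h

/-! Structural lemmas -/

theorem normal_cons {h : Hyp} {Γ : Ctx} (hh : h.suspNormal) (hΓ : Ctx.suspNormal Γ) :
    Ctx.suspNormal (h :: Γ) := by
  intro x hx
  rcases List.mem_cons.mp hx with rfl | hx
  · exact hh
  · exact hΓ _ hx

theorem sub_swap {a b : Hyp} {Δ Γ : Ctx} (h : Δ ⊆ b :: Γ) : a :: Δ ⊆ b :: a :: Γ := by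
  intro x hx
  rcases List.mem_cons.mp hx with rfl | hx
  · exact List.mem_cons_of_mem _ (List.mem_cons_self)
  · rcases List.mem_cons.mp (h hx) with rfl | hx'
    · exact List.mem_cons_self
    · exact List.mem_cons_of_mem _ (List.mem_cons_of_mem _ hx')

def Seq.ctx : Seq → Ctx
  | .rfoc Γ _ => Γ
  | .inv Γ _ _ => Γ
  | .lfoc Γ _ _ => Γ

def Seq.withCtx : Seq → Ctx → Seq
  | .rfoc _ A, Γ => .rfoc Γ A
  | .inv _ Ω U, Γ => .inv Γ Ω U
  | .lfoc _ B U, Γ => .lfoc Γ B U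

/-- Weakening. -/
theorem weakD : ∀ {s}, D s → ∀ {Γ'}, s.ctx ⊆ Γ' → D (s.withCtx Γ') := by
  intro s d
  induction d with
  | idP h => exact fun hs => D.idP (hs h)
  | downR _ ih => exact fun hs => D.downR (ih hs)
  | orR1 _ ih => exact fun hs => D.orR1 (ih hs)
  | orR2 _ ih => exact fun hs => D.orR2 (ih hs)
  | topR => exact fun _ => D.topR
  | andR _ _ ih1 ih2 => exact fun hs => D.andR (ih1 hs) (ih2 hs)
  | focR _ ih => exact fun hs => D.focR (ih hs)
  | focL h st _ ih => exact fun hs => D.focL (hs h) st (ih hs)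
  | etaP _ ih => exact fun hs => D.etaP (ih (List.cons_subset_cons _ hs))
  | downL _ ih => exact fun hs => D.downL (ih (List.cons_subset_cons _ hs))
  | botL => exact fun _ => D.botL
  | orL _ _ ih1 ih2 => exact fun hs => D.orL (ih1 hs) (ih2 hs)
  | topPL _ ih => exact fun hs => D.topPL (ih hs)
  | andPL _ ih => exact fun hs => D.andPL (ih hs)
  | etaN _ ih => exact fun hs => D.etaN (ih hs)
  | upR _ ih => exact fun hs => D.upR (ih hs)
  | impR _ ih => exact fun hs => D.impR (ih hs)
  | topNR => exact fun _ => D.topNR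
  | andNR _ _ ih1 ih2 => exact fun hs => D.andNR (ih1 hs) (ih2 hs)
  | idN => exact fun _ => D.idN
  | upL _ ih => exact fun hs => D.upL (ih hs)
  | impL _ _ ih1 ih2 => exact fun hs => D.impL (ih1 hs) (ih2 hs)
  | andL1 _ ih => exact fun hs => D.andL1 (ih hs)
  | andL2 _ ih => exact fun hs => D.andL2 (ih hs)

theorem weakInvD {Γ Γ' Ω U} (d : D (.inv Γ Ω U)) (hs : Γ ⊆ Γ') : D (.inv Γ' Ω U) :=
  weakD d hs

theorem weakRFocD {Γ Γ' A} (d : D (.rfoc Γ A)) (hs : Γ ⊆ Γ') : D (.rfoc Γ' A) :=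
  weakD d hs

/-! Hypothesis substitution (negative substitution into the context). -/

def Seq.subst3Motive (B : NProp) : Seq → Prop
  | .rfoc Δ A => ∀ Γ, Δ ⊆ Hyp.neg B :: Γ → Ctx.suspNormal Γ →
      D (.inv Γ [] (Succ.neg B)) → D (.rfoc Γ A)
  | .inv Δ Ω U => U.suspNormal → ∀ Γ, Δ ⊆ Hyp.neg B :: Γ → Ctx.suspNormal Γ →
      D (.inv Γ [] (Succ.neg B)) → D (.inv Γ Ω U)
  | .lfoc Δ C U => U.suspNormal → ∀ Γ, Δ ⊆ Hyp.neg B :: Γ → Ctx.suspNormal Γ →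
      D (.inv Γ [] (Succ.neg B)) → D (.lfoc Γ C U)

theorem subst3 {B : NProp}
    (s2 : ∀ {Γ U}, Ctx.suspNormal Γ → Succ.suspNormal U → Succ.stable U →
      D (.inv Γ [] (Succ.neg B)) → D (.lfoc Γ B U) → D (.inv Γ [] U)) :
    ∀ {s}, D s → Seq.subst3Motive B s := by
  intro s d
  induction d with
  | idP h =>
    intro Γ hs hΓ hD
    rcases List.mem_cons.mp (hs h) with h' | h'
    · cases h'
    · exact D.idP h'
  | downR _ ih =>
    intro Γ hs hΓ hD
    exact D.downR (ih trivial Γ hs hΓ hD)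
  | orR1 _ ih =>
    intro Γ hs hΓ hD
    exact D.orR1 (ih Γ hs hΓ hD)
  | orR2 _ ih =>
    intro Γ hs hΓ hD
    exact D.orR2 (ih Γ hs hΓ hD)
  | topR => intro Γ hs hΓ hD; exact D.topR
  | andR _ _ ih1 ih2 =>
    intro Γ hs hΓ hD
    exact D.andR (ih1 Γ hs hΓ hD) (ih2 Γ hs hΓ hD)
  | focR _ ih =>
    intro _ Γ hs hΓ hD
    exact D.focR (ih Γ hs hΓ hD)
  | @focL _ C U h st _ ih =>
    intro hU Γ hs hΓ hD
    rcases List.mem_cons.mp (hs h) with h' | h'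
    · cases h'
      exact s2 hΓ hU st hD (ih hU Γ hs hΓ hD)
    · exact D.focL h' st (ih hU Γ hs hΓ hD)
  | @etaP _ p _ _ _ ih =>
    intro hU Γ hs hΓ hD
    exact D.etaP (ih hU (Hyp.susp (PProp.atom p) :: Γ) (sub_swap hs)
      (normal_cons trivial hΓ) (weakInvD hD (List.subset_cons_self _ _)))
  | @downL _ C _ _ _ ih =>
    intro hU Γ hs hΓ hD
    exact D.downL (ih hU (Hyp.neg C :: Γ) (sub_swap hs)
      (normal_cons trivial hΓ) (weakInvD hD (List.subset_cons_self _ _)))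
  | botL => intro _ Γ hs hΓ hD; exact D.botL
  | orL _ _ ih1 ih2 =>
    intro hU Γ hs hΓ hD
    exact D.orL (ih1 hU Γ hs hΓ hD) (ih2 hU Γ hs hΓ hD)
  | topPL _ ih =>
    intro hU Γ hs hΓ hD
    exact D.topPL (ih hU Γ hs hΓ hD)
  | andPL _ ih =>
    intro hU Γ hs hΓ hD
    exact D.andPL (ih hU Γ hs hΓ hD)
  | etaN _ ih =>
    intro _ Γ hs hΓ hD
    exact D.etaN (ih trivial Γ hs hΓ hD)
  | upR _ ih =>
    intro _ Γ hs hΓ hD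
    exact D.upR (ih trivial Γ hs hΓ hD)
  | impR _ ih =>
    intro _ Γ hs hΓ hD
    exact D.impR (ih trivial Γ hs hΓ hD)
  | topNR => intro _ Γ hs hΓ hD; exact D.topNR
  | andNR _ _ ih1 ih2 =>
    intro _ Γ hs hΓ hD
    exact D.andNR (ih1 trivial Γ hs hΓ hD) (ih2 trivial Γ hs hΓ hD)
  | idN => intro _ Γ hs hΓ hD; exact D.idN
  | upL _ ih =>
    intro hU Γ hs hΓ hD
    exact D.upL (ih hU Γ hs hΓ hD)
  | impL _ _ ih1 ih2 =>
    intro hU Γ hs hΓ hD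
    exact D.impL (ih1 Γ hs hΓ hD) (ih2 hU Γ hs hΓ hD)
  | andL1 _ ih =>
    intro hU Γ hs hΓ hD
    exact D.andL1 (ih hU Γ hs hΓ hD)
  | andL2 _ ih =>
    intro hU Γ hs hΓ hD
    exact D.andL2 (ih hU Γ hs hΓ hD)

/-! Leftist substitution on `D` (rightist commutative part of it), parameterized by
    the principal positive substitution at the cut formula. -/

def Seq.subst4Motive (A : PProp) (U : Succ) : Seq → Prop
  | .rfoc _ _ => True
  | .inv Δ Ω V => V = Succ.pos A → ∀ Γ, Δ ⊆ Γ → Ctx.suspNormal Γ →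
      D (.inv Γ [A] U) → D (.inv Γ Ω U)
  | .lfoc Δ C V => V = Succ.pos A → ∀ Γ, Δ ⊆ Γ → Ctx.suspNormal Γ →
      D (.inv Γ [A] U) → D (.lfoc Γ C U)

theorem subst4 {A : PProp} {U : Succ} (hst : Succ.stable U)
    (s1 : ∀ {Γ}, Ctx.suspNormal Γ → D (.rfoc Γ A) → D (.inv Γ [A] U) → D (.inv Γ [] U)) :
    ∀ {s}, D s → Seq.subst4Motive A U s := by
  intro s d
  induction d with
  | idP _ => trivial
  | downR _ _ => trivial
  | orR1 _ _ => trivial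
  | orR2 _ _ => trivial
  | topR => trivial
  | andR _ _ _ _ => trivial
  | focR v _ =>
    intro hV Γ hs hΓ hE
    cases hV
    exact s1 hΓ (weakRFocD v hs) hE
  | focL h _ _ ih =>
    intro hV Γ hs hΓ hE
    exact D.focL (hs h) hst (ih hV Γ hs hΓ hE)
  | @etaP _ p _ _ _ ih =>
    intro hV Γ hs hΓ hE
    exact D.etaP (ih hV (Hyp.susp (PProp.atom p) :: Γ) (List.cons_subset_cons _ hs)
      (normal_cons trivial hΓ) (weakInvD hE (List.subset_cons_self _ _)))
  | @downL _ C _ _ _ ih =>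
    intro hV Γ hs hΓ hE
    exact D.downL (ih hV (Hyp.neg C :: Γ) (List.cons_subset_cons _ hs)
      (normal_cons trivial hΓ) (weakInvD hE (List.subset_cons_self _ _)))
  | botL => intro hV Γ hs hΓ hE; exact D.botL
  | orL _ _ ih1 ih2 =>
    intro hV Γ hs hΓ hE
    exact D.orL (ih1 hV Γ hs hΓ hE) (ih2 hV Γ hs hΓ hE)
  | topPL _ ih =>
    intro hV Γ hs hΓ hE
    exact D.topPL (ih hV Γ hs hΓ hE)
  | andPL _ ih =>
    intro hV Γ hs hΓ hE
    exact D.andPL (ih hV Γ hs hΓ hE)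
  | etaN _ _ => intro hV; cases hV
  | upR _ _ => intro hV; cases hV
  | impR _ _ => intro hV; cases hV
  | topNR => intro hV; cases hV
  | andNR _ _ _ _ => intro hV; cases hV
  | idN => intro hV; cases hV
  | upL _ ih =>
    intro hV Γ hs hΓ hE
    exact D.upL (ih hV Γ hs hΓ hE)
  | impL v _ _ ih2 =>
    intro hV Γ hs hΓ hE
    exact D.impL (weakRFocD v hs) (ih2 hV Γ hs hΓ hE)
  | andL1 _ ih =>
    intro hV Γ hs hΓ hE
    exact D.andL1 (ih hV Γ hs hΓ hE)
  | andL2 _ ih =>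
    intro hV Γ hs hΓ hE
    exact D.andL2 (ih hV Γ hs hΓ hE)

/-! Sizes of cut formulas -/

mutual
def sizeP : PProp → Nat
  | .atom _ => 0
  | .down A => sizeN A + 1
  | .bot => 0
  | .or A B => sizeP A + sizeP B + 1
  | .top => 0
  | .and A B => sizeP A + sizeP B + 1
def sizeN : NProp → Nat
  | .atom _ => 0
  | .up A => sizeP A + 1
  | .imp A B => sizeP A + sizeN B + 1
  | .top => 0
  | .and A B => sizeN A + sizeN B + 1
end

theorem susp_normal_atom {Γ A} (hΓ : Ctx.suspNormal Γ) (h : Hyp.susp A ∈ Γ) :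
    ∃ p, A = PProp.atom p := by
  have hh := hΓ _ h
  cases A with
  | atom p => exact ⟨p, rfl⟩
  | down _ => simp [Hyp.suspNormal] at hh
  | bot => simp [Hyp.suspNormal] at hh
  | or _ _ => simp [Hyp.suspNormal] at hh
  | top => simp [Hyp.suspNormal] at hh
  | and _ _ => simp [Hyp.suspNormal] at hh

/-- The main mutual induction: principal substitutions, by strong induction on
    the size of the cut formula. -/
theorem main : ∀ n : Nat,
    (∀ A, sizeP A ≤ n → ∀ Γ Ω U, Ctx.suspNormal Γ → Succ.suspNormal U →
      D (.rfoc Γ A) → D (.inv Γ (A :: Ω) U) → D (.inv Γ Ω U)) ∧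
    (∀ B, sizeN B ≤ n → ∀ Γ U, Ctx.suspNormal Γ → Succ.suspNormal U → Succ.stable U →
      D (.inv Γ [] (Succ.neg B)) → D (.lfoc Γ B U) → D (.inv Γ [] U)) := by
  intro n
  induction n using Nat.strong_induction_on with
  | _ n IH =>
  constructor
  · -- S1: substituting a value for the first inversion formula
    intro A hA Γ Ω U hΓ hU v E
    cases v with
    | idP h =>
      obtain ⟨p, rfl⟩ := susp_normal_atom hΓ h
      cases E with
      | etaP E' => exact weakInvD E' (List.cons_subset.mpr ⟨h, List.Subset.refl _⟩)
    | @downR _ B dB =>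
      cases E with
      | downL E' =>
        have hlt : sizeN B < n := lt_of_lt_of_le (by simp [sizeP]) hA
        exact subst3 (B := B)
          (fun {Γ' U'} hΓ' hU' hst' d e => (IH _ hlt).2 B le_rfl Γ' U' hΓ' hU' hst' d e)
          E' hU Γ (List.Subset.refl _) hΓ dB
    | @orR1 _ A1 A2 v1 =>
      cases E with
      | orL E1 E2 =>
        have hlt : sizeP A1 < n := lt_of_lt_of_le (by simp [sizeP]) hA
        exact (IH _ hlt).1 A1 le_rfl Γ Ω U hΓ hU v1 E1
    | @orR2 _ A1 A2 v2 =>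
      cases E with
      | orL E1 E2 =>
        have hlt : sizeP A2 < n := lt_of_lt_of_le (by simp [sizeP]) hA
        exact (IH _ hlt).1 A2 le_rfl Γ Ω U hΓ hU v2 E2
    | topR =>
      cases E with
      | topPL E' => exact E'
    | @andR _ A1 A2 v1 v2 =>
      cases E with
      | andPL E' =>
        have h1 : sizeP A1 < n := lt_of_lt_of_le (by simp [sizeP]) hA
        have h2 : sizeP A2 < n := lt_of_lt_of_le (by simp [sizeP]) hA
        exact (IH _ h2).1 A2 le_rfl Γ Ω U hΓ hU v2
          ((IH _ h1).1 A1 le_rfl Γ (A2 :: Ω) U hΓ hU v1 E')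
  · -- S2: principal negative substitution
    intro B hB Γ U hΓ hU hst dB E
    cases B with
    | atom p =>
      cases E with
      | idN =>
        cases dB with
        | etaN d' => exact d'
        | focL _ st _ => simp [Succ.stable] at st
    | @up A =>
      cases E with
      | idN => simp [Succ.suspNormal] at hU
      | upL E' =>
        cases dB with
        | upR d' =>
          have hlt : sizeP A < n := lt_of_lt_of_le (by simp [sizeN]) hB
          exact subst4 hst
            (fun {Γ'} hΓ' v e => (IH _ hlt).1 A le_rfl Γ' [] U hΓ' hU v e)
            d' rfl Γ (List.Subset.refl _) hΓ E'
        | focL _ st _ => simp [Succ.stable] at st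
    | @imp A B' =>
      cases E with
      | idN => simp [Succ.suspNormal] at hU
      | impL v E' =>
        cases dB with
        | impR d' =>
          have h1 : sizeP A < n := lt_of_lt_of_le (by simp [sizeN]) hB
          have h2 : sizeN B' < n := lt_of_lt_of_le (by simp [sizeN]) hB
          have dB' : D (.inv Γ [] (Succ.neg B')) :=
            (IH _ h1).1 A le_rfl Γ [] (Succ.neg B') hΓ trivial v d'
          exact (IH _ h2).2 B' le_rfl Γ U hΓ hU hst dB' E'
        | focL _ st _ => simp [Succ.stable] at st
    | top =>
      cases E with
      | idN => simp [Succ.suspNormal] at hU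
    | @and B1 B2 =>
      cases E with
      | idN => simp [Succ.suspNormal] at hU
      | andL1 E1 =>
        cases dB with
        | andNR d1 d2 =>
          have h1 : sizeN B1 < n := lt_of_lt_of_le (by simp [sizeN]) hB
          exact (IH _ h1).2 B1 le_rfl Γ U hΓ hU hst d1 E1
        | focL _ st _ => simp [Succ.stable] at st
      | andL2 E2 =>
        cases dB with
        | andNR d1 d2 =>
          have h2 : sizeN B2 < n := lt_of_lt_of_le (by simp [sizeN]) hB
          exact (IH _ h2).2 B2 le_rfl Γ U hΓ hU hst d2 E2
        | focL _ st _ => simp [Succ.stable] at st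

/-- Left commutative cut (leftist substitution): the first given derivation
    Γ ; L ⊢ A⁺ may be an inversion sequent (L = Ω) or a left focus (L = [B⁻]). -/
theorem left_commutative_cut {Γ : Ctx} {A : PProp} {U : Succ}
    (hΓ : Ctx.suspNormal Γ) (hU : Succ.suspNormal U) (hst : Succ.stable U)
    (h2 : Inv Γ [A] U) :
    (∀ Ω, Inv Γ Ω (Succ.pos A) → Inv Γ Ω U) ∧
    (∀ B, LFoc Γ B (Succ.pos A) → LFoc Γ B U) := by
  have s1 : ∀ {Γ'}, Ctx.suspNormal Γ' → D (.rfoc Γ' A) → D (.inv Γ' [A] U) →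
      D (.inv Γ' [] U) :=
    fun {Γ'} hΓ' v e => (main (sizeP A)).1 A le_rfl Γ' [] U hΓ' hU v e
  constructor
  · intro Ω h1
    exact ofD (subst4 hst s1 (toD_inv h1) rfl Γ (List.Subset.refl _) hΓ (toD_inv h2))
  · intro B h1
    exact ofD (subst4 hst s1 (toD_lfoc h1) rfl Γ (List.Subset.refl _) hΓ (toD_inv h2))

end StructuralFocalization
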